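/- arXiv:1401.2608 — 6 statements merged into one kernel-verified Lean document; each statement's English description precedes it below -/
import Mathlib

section
/- Let X be a type, i : X, and x, y : Finset X. Then x ∪ {i} = y ∪ {i} if and only if (x = y ∪ {i}) ∨ (y = x ∪ {i}) ∨ (x = y). -/
theorem stmt_0 {X : Type*} [DecidableEq X] (i : X) (x y : Finset X) :
    x ∪ {i} = y ∪ {i} ↔ (x = y ∪ {i} ∨ y = x ∪ {i} ∨ x = y) := by
  constructor
  · intro h
    by_cases hx : i ∈ x <;> by_cases hy : i ∈ y
    · right; right
      ext a
      have := Finset.ext_iff.mp h a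
      simp only [Finset.mem_union, Finset.mem_singleton] at this
      by_cases ha : a = i
      · subst ha; simp [hx, hy]
      · constructor <;> intro hm
        · rcases this.mp (Or.inl hm) with h' | h'
          · exact h'
          · exact absurd h' ha
        · rcases this.mpr (Or.inl hm) with h' | h'
          · exact h'
          · exact absurd h' ha
    · left
      have : x ∪ {i} = x := by simp [Finset.union_eq_left, hx]
      rw [← h, this]
    · right; left
      have : y ∪ {i} = y := by simp [Finset.union_eq_left, hy]
      rw [h, this]
    · right; right
      ext a
      have := Finset.ext_iff.mp h a
      simp only [Finset.mem_union, Finset.mem_singleton] at this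
      constructor <;> intro hm
      · rcases this.mp (Or.inl hm) with h' | h'
        · exact h'
        · subst h'; exact absurd hm hx
      · rcases this.mpr (Or.inl hm) with h' | h'
        · exact h'
        · subst h'; exact absurd hm hy
  · rintro (h | h | h) <;> subst h <;> simp [Finset.union_assoc]
end

section
/- Let X be a type and a, x, y : Finset X. Then x ∪ a = y ∪ a if and only if there exist a', a'' : Finset X with a' ⊆ a, a'' ⊆ a, Disjoint a' a'', and x ∪ a' = y ∪ a''. -/
theorem stmt_1 {X : Type*} [DecidableEq X] (a x y : Finset X) :
    x ∪ a = y ∪ a ↔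
      ∃ a' a'' : Finset X, a' ⊆ a ∧ a'' ⊆ a ∧ Disjoint a' a'' ∧ x ∪ a' = y ∪ a'' := by
  constructor
  · intro h
    refine ⟨y \ x, x \ y, ?_, ?_, disjoint_sdiff_sdiff, ?_⟩
    · intro t ht
      have : t ∈ y ∪ a := Finset.mem_union_left a (Finset.mem_sdiff.mp ht).1
      rw [← h] at this
      rcases Finset.mem_union.mp this with h1 | h1
      · exact absurd h1 (Finset.mem_sdiff.mp ht).2
      · exact h1
    · intro t ht
      have : t ∈ x ∪ a := Finset.mem_union_left a (Finset.mem_sdiff.mp ht).1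
      rw [h] at this
      rcases Finset.mem_union.mp this with h1 | h1
      · exact absurd h1 (Finset.mem_sdiff.mp ht).2
      · exact h1
    · rw [Finset.union_sdiff_self_eq_union, Finset.union_sdiff_self_eq_union,
        Finset.union_comm]
  · rintro ⟨a', a'', h1, h2, _, h4⟩
    calc x ∪ a = (x ∪ a') ∪ a := by rw [Finset.union_assoc, Finset.union_eq_right.mpr h1]
    _ = (y ∪ a'') ∪ a := by rw [h4]
    _ = y ∪ a := by rw [Finset.union_assoc, Finset.union_eq_right.mpr h2]
end

section
/- Let X be a type and c, d, x : Finset X with Disjoint c d. Then x ∪ c = x ∪ d if and only if c ∪ d ⊆ x. -/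
theorem stmt_4 {X : Type*} [DecidableEq X] (c d x : Finset X) (hcd : Disjoint c d) :
    x ∪ c = x ∪ d ↔ c ∪ d ⊆ x := by
  constructor
  · intro h
    intro a ha
    rcases Finset.mem_union.1 ha with h1 | h1
    · have : a ∈ x ∪ d := h ▸ Finset.mem_union_right x h1
      rcases Finset.mem_union.1 this with h2 | h2
      · exact h2
      · exact absurd (Finset.disjoint_left.1 hcd h1 h2) (fun f => f)
    · have : a ∈ x ∪ c := h.symm ▸ Finset.mem_union_right x h1
      rcases Finset.mem_union.1 this with h2 | h2
      · exact h2
      · exact absurd h1 (Finset.disjoint_left.1 hcd h2)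
  · intro h
    have hc : c ⊆ x := (Finset.union_subset_iff.1 h).1
    have hd : d ⊆ x := (Finset.union_subset_iff.1 h).2
    rw [Finset.union_eq_left.2 hc, Finset.union_eq_left.2 hd]
end

section
/- Let X be a type, c, d : Finset X with Disjoint c d, ι a nonempty type, and e : ι → Finset X. Then there exists a finite subset s : Finset ι such that for all x, y : Finset X, if x ∪ e i ∪ c = y ∪ e i ∪ d holds for all i ∈ s, then x ∪ e i ∪ c = y ∪ e i ∪ d holds for all i : ι. -/
theorem stmt_8 {X : Type*} [DecidableEq X] (c d : Finset X) (hcd : Disjoint c d)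
    {ι : Type*} [Nonempty ι] (e : ι → Finset X) :
    ∃ s : Finset ι, ∀ x y : Finset X,
      (∀ i ∈ s, x ∪ e i ∪ c = y ∪ e i ∪ d) → ∀ i : ι, x ∪ e i ∪ c = y ∪ e i ∪ d := by
  classical
  obtain ⟨i0⟩ := ‹Nonempty ι›
  set f : X → ι := fun a => if h : ∃ i, a ∉ e i then h.choose else i0 with hf
  refine ⟨insert i0 ((e i0).image f), ?_⟩
  intro x y h j
  ext a
  simp only [Finset.mem_union]
  by_cases hj : a ∈ e j
  · simp [hj]
  · have key : ∃ i ∈ insert i0 ((e i0).image f), a ∉ e i := by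
      by_cases h0 : a ∈ e i0
      · refine ⟨f a, Finset.mem_insert_of_mem (Finset.mem_image_of_mem f h0), ?_⟩
        have hex : ∃ i, a ∉ e i := ⟨j, hj⟩
        simp only [hf, dif_pos hex]
        exact hex.choose_spec
      · exact ⟨i0, Finset.mem_insert_self _ _, h0⟩
    obtain ⟨i, hi, hai⟩ := key
    have h2 := Finset.ext_iff.mp (h i hi) a
    simp only [Finset.mem_union] at h2
    tauto
end

section
/- Let I be an infinite type, n : ℕ, and let S be a finite set of pairwise distinct finsets of I ⊕ Fin n. Then there exists an injective map g : Fin n → I such that the map sending a finset s : Finset (I ⊕ Fin n) to its image under Sum.elim id g (a finset of I) is injective on S. -/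
theorem stmt_9 {I : Type*} [Infinite I] [DecidableEq I] (n : ℕ)
    (S : Finset (Finset (I ⊕ Fin n))) :
    ∃ g : Fin n → I, Function.Injective g ∧
      Set.InjOn (fun s : Finset (I ⊕ Fin n) => s.image (Sum.elim id g)) ↑S := by
  classical
  set U : Finset I := (S.sup id).toLeft with hU
  have hinf : ((↑U : Set I)ᶜ).Infinite := (U.finite_toSet).infinite_compl
  haveI : Infinite ((↑U : Set I)ᶜ : Set I) := hinf.to_subtype
  let e := Infinite.natEmbedding ((↑U : Set I)ᶜ : Set I)
  refine ⟨fun i => (e i.val).1, ?_, ?_⟩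
  · intro i j h
    have := e.injective (Subtype.ext h)
    exact Fin.val_injective this
  · set g : Fin n → I := fun i => (e i.val).1 with hg
    have hginj : Function.Injective g := fun i j h =>
      Fin.val_injective (e.injective (Subtype.ext h))
    have hgU : ∀ i, g i ∉ U := fun i => by
      have h2 := (e i.val).2
      simp only [Set.mem_compl_iff, Finset.mem_coe] at h2
      exact h2
    have hinj : Set.InjOn (Sum.elim id g) {x | x ∈ S.sup id} := by
      rintro (a | i) ha (b | j) hb hab
      · simpa using hab
      · simp only [Sum.elim_inl, Sum.elim_inr, id] at hab
        exact absurd (Finset.mem_toLeft.mpr ha) (hab ▸ hgU j)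
      · simp only [Sum.elim_inl, Sum.elim_inr, id] at hab
        exact absurd (Finset.mem_toLeft.mpr hb) (hab ▸ hgU i)
      · simp only [Sum.elim_inr] at hab; exact congrArg Sum.inr (hginj hab)
    intro s hs t ht hst
    simp only at hst
    have hs' : (↑s : Set (I ⊕ Fin n)) ⊆ {x | x ∈ S.sup id} := fun x hx =>
      Finset.mem_sup.mpr ⟨s, hs, hx⟩
    have ht' : (↑t : Set (I ⊕ Fin n)) ⊆ {x | x ∈ S.sup id} := fun x hx =>
      Finset.mem_sup.mpr ⟨t, ht, hx⟩
    have : (Sum.elim id g) '' ↑s = (Sum.elim id g) '' ↑t := by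
      rw [← Finset.coe_image, ← Finset.coe_image, hst]
    exact Finset.coe_injective ((hinj.image_eq_image_iff hs' ht').mp this)
end

section
/- Let X be a type, i : X, and x, y : Finset X. The solution set of x ∪ {i} = y ∪ {i} is exactly the union of three families: {(t, {i} ∪ t) | t : Finset X} ∪ {({i} ∪ t, t) | t : Finset X} ∪ {(t, t) | t : Finset X}. -/
theorem stmt_15 {X : Type*} [DecidableEq X] (i : X) :
    {p : Finset X × Finset X | p.1 ∪ {i} = p.2 ∪ {i}} =
      {p : Finset X × Finset X | ∃ t, p = (t, {i} ∪ t)} ∪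
        {p : Finset X × Finset X | ∃ t, p = ({i} ∪ t, t)} ∪
          {p : Finset X × Finset X | ∃ t, p = (t, t)} := by
  ext ⟨x, y⟩
  simp only [Set.mem_setOf_eq, Set.mem_union, Prod.mk.injEq, Prod.ext_iff]
  constructor
  · intro h
    by_cases hx : i ∈ x <;> by_cases hy : i ∈ y
    · right
      refine ⟨x, rfl, ?_⟩
      rw [Finset.union_eq_left.2 (by simpa using hx),
        Finset.union_eq_left.2 (by simpa using hy)] at h
      exact h.symm
    · left; right
      refine ⟨y, ?_, rfl⟩
      rw [Finset.union_eq_left.2 (by simpa using hx)] at h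
      rw [h, Finset.union_comm]
    · left; left
      refine ⟨x, rfl, ?_⟩
      rw [show y ∪ {i} = y from Finset.union_eq_left.2 (by simpa using hy)] at h
      rw [← h, Finset.union_comm]
    · right
      refine ⟨x, rfl, ?_⟩
      rw [Finset.union_comm x, Finset.union_comm y, ← Finset.insert_eq,
        ← Finset.insert_eq] at h
      have := congrArg (Finset.erase · i) h
      simpa [Finset.erase_insert hx, Finset.erase_insert hy] using this.symm
  · rintro ((⟨t, rfl, rfl⟩ | ⟨t, rfl, rfl⟩) | ⟨t, rfl, rfl⟩) <;>
      simp [Finset.union_assoc, Finset.union_comm, Finset.union_left_comm]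
end
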